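/- Let {𝒴_n} be a sequence of at most countable sets, {W_n : 𝒳 → 𝒴_n} a sequence of q-ary DMCs, and σ, τ permutations of 𝒳. Define W'_n(y₁,y₂|x) := W_n(y₁|σ(x))·W_n(y₂|τ(x)). If lim_{n→∞} ( I(W'_n) − I(W_n) ) = 0, then for every δ ∈ (0,1/2) there exists m such that for every n ≥ m and every x, x' ∈ 𝒳, the average Bhattacharyya parameter Z^{τ∘σ⁻¹}_{x,x'}(W_n) lies outside the open interval (δ, 1−δ). -/

import Mathlib

open MeasureTheory Filter Real
open scoped Classical

noncomputable section

namespace Polar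

/-- `IsChannel W` : `W x y` is the probability of output `y` given input `x`,
each row is a probability distribution. -/
def IsChannel {X Y : Type*} (W : X → Y → ℝ) : Prop :=
  (∀ x y, 0 ≤ W x y) ∧ ∀ x, HasSum (W x) 1

/-- Bhattacharyya parameter `Z_{x,x'}(W)` between inputs `x` and `x'`. -/
def Zb {X Y : Type*} (W : X → Y → ℝ) (x x' : X) : ℝ :=
  ∑' y, Real.sqrt (W x y * W x' y)

/-- Symmetric capacity `I(W)` (logarithms to base `q = |X|`). -/
def symCap {X Y : Type*} [Fintype X] (W : X → Y → ℝ) : ℝ :=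
  ∑ x, ∑' y, (1 / (Fintype.card X : ℝ)) * W x y *
    Real.logb (Fintype.card X) (W x y / ((1 / (Fintype.card X : ℝ)) * ∑ x', W x' y))

/-- Average Bhattacharyya parameter `Z^σ_{x,x'}(W)` with respect to a
permutation `σ` of the input alphabet. -/
def ZbAvgPerm {X Y : Type*} [Fintype X] (W : X → Y → ℝ) (σ : Equiv.Perm X)
    (x x' : X) : ℝ :=
  (1 / (Nat.factorial (Fintype.card X) : ℝ)) *
    ∑ i ∈ Finset.range (Nat.factorial (Fintype.card X)),
      Zb W ((σ ^ i) x) ((σ ^ i) x')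

set_option linter.unusedSectionVars false
set_option linter.unusedVariables false

/-! ### pointwise helper lemmas -/

lemma sqrt_mul_self' {b : ℝ} (hb : 0 ≤ b) {m : ℝ} (hm : 0 ≤ m) :
    b * Real.sqrt (m / b) = Real.sqrt (b * m) := by
  rcases eq_or_lt_of_le hb with h0 | h0
  · simp [← h0]
  rw [show b * m = b^2 * (m / b) by field_simp, Real.sqrt_mul (by positivity),
    Real.sqrt_sq hb]

/-- key pointwise log inequality -/
lemma log_ineq {b m : ℝ} (hb : 0 ≤ b) (h : m = 0 → b = 0) (hm : 0 ≤ m) :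
    2 * (b - Real.sqrt (b * m)) ≤ b * Real.log (b / m) := by
  rcases eq_or_lt_of_le hb with hb0 | hb0
  · simp [← hb0]
  have hm0 : 0 < m := by
    rcases eq_or_lt_of_le hm with h0 | h0
    · exact absurd (h h0.symm) hb0.ne'
    · exact h0
  have hs : 0 < Real.sqrt (m / b) := Real.sqrt_pos.2 (by positivity)
  have hlog := Real.log_le_sub_one_of_pos hs
  have h1 : Real.log (Real.sqrt (m / b)) = -(1/2) * Real.log (b / m) := by
    rw [Real.log_sqrt (by positivity), Real.log_div hm0.ne' hb0.ne',
      Real.log_div hb0.ne' hm0.ne']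
    ring
  rw [h1] at hlog
  have h3 := sqrt_mul_self' hb hm
  nlinarith [hb0, Real.sqrt_nonneg (m/b)]

/-- two-point quadratic inequality -/
lemma two_point {p p' s a b c : ℝ} (hp : 0 ≤ p) (hp' : 0 ≤ p') (hs : p + p' ≤ s)
    (hs0 : 0 < s) : p * p' / s * (a - b)^2 ≤ p * (a - c)^2 + p' * (b - c)^2 := by
  rw [div_mul_eq_mul_div, div_le_iff₀ hs0]
  have key : p * p' * (a - b)^2 ≤ (p + p') * (p * (a - c)^2 + p' * (b - c)^2) := by
    nlinarith [sq_nonneg (p*(a-c) - p'*(b-c)), sq_nonneg (p*(a-c) + p'*(b-c))]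
  have h2 : (p + p') * (p * (a - c)^2 + p' * (b - c)^2) ≤
      s * (p * (a - c)^2 + p' * (b - c)^2) := by
    apply mul_le_mul_of_nonneg_right hs
    positivity
  nlinarith

lemma sqrt_mul_le {a b : ℝ} (ha : 0 ≤ a) (hb : 0 ≤ b) :
    Real.sqrt (a * b) ≤ (a + b) / 2 := by
  nlinarith [Real.sq_sqrt (mul_nonneg ha hb), Real.sqrt_nonneg (a*b), sq_nonneg (a - b),
    sq_nonneg (Real.sqrt (a*b))]

lemma summable_of_le_of_le {Y : Type*} {f g h : Y → ℝ} (hgf : ∀ y, g y ≤ f y)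
    (hfh : ∀ y, f y ≤ h y) (hg : Summable g) (hh : Summable h) : Summable f := by
  have h1 : Summable (fun y => f y - g y) :=
    Summable.of_nonneg_of_le (fun y => sub_nonneg.2 (hgf y))
      (fun y => sub_le_sub_right (hfh y) _) (hh.sub hg)
  simpa using h1.add hg

/-! ### channel basics -/

section chan
variable {X Y : Type*} [Fintype X] {W : X → Y → ℝ}

lemma summable_row (hW : IsChannel W) (x : X) : Summable (W x) := (hW.2 x).summable

lemma summable_add_div_two (hW : IsChannel W) (x x' : X) :
    Summable (fun y => (W x y + W x' y)/2) := by
  simpa using ((summable_row hW x).add (summable_row hW x')).div_const 2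

lemma summable_sqrt_mul (hW : IsChannel W) (x x' : X) :
    Summable (fun y => Real.sqrt (W x y * W x' y)) :=
  Summable.of_nonneg_of_le (fun y => Real.sqrt_nonneg _)
    (fun y => sqrt_mul_le (hW.1 x y) (hW.1 x' y)) (summable_add_div_two hW x x')

lemma Zb_nonneg {x x' : X} : 0 ≤ Zb W x x' := tsum_nonneg (fun y => Real.sqrt_nonneg _)

lemma Zb_le_one (hW : IsChannel W) {x x' : X} : Zb W x x' ≤ 1 := by
  have h := Summable.tsum_le_tsum (fun y => sqrt_mul_le (hW.1 x y) (hW.1 x' y))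
    (summable_sqrt_mul hW x x') (summable_add_div_two hW x x')
  calc Zb W x x' ≤ ∑' y, (W x y + W x' y)/2 := h
    _ = 1 := by
        rw [tsum_div_const, Summable.tsum_add (summable_row hW x) (summable_row hW x'),
          (hW.2 x).tsum_eq, (hW.2 x').tsum_eq]
        norm_num

lemma Zb_self (hW : IsChannel W) (x : X) : Zb W x x = 1 := by
  unfold Zb
  rw [tsum_congr (fun y => Real.sqrt_mul_self (hW.1 x y)), (hW.2 x).tsum_eq]

lemma summable_S (hW : IsChannel W) : Summable (fun y => ∑ x', W x' y) :=
  summable_sum (fun x _ => summable_row hW x)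

lemma tsum_S (hW : IsChannel W) : ∑' y, ∑ x', W x' y = (Fintype.card X : ℝ) := by
  rw [Summable.tsum_finsetSum (fun x _ => summable_row hW x)]
  simp [(hW.2 _).tsum_eq]

lemma le_S (hW : IsChannel W) (x : X) (y : Y) : W x y ≤ ∑ x', W x' y :=
  Finset.single_le_sum (fun x' _ => hW.1 x' y) (Finset.mem_univ x)

end chan

/-! ### capacity integrand -/

section cap
variable {X Y : Type*} [Fintype X] {W : X → Y → ℝ}

/-- the integrand of `symCap` (without the `1/q` factor) -/
def capf [Fintype X] (W : X → Y → ℝ) (x : X) (y : Y) : ℝ :=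
  W x y * Real.logb (Fintype.card X) (W x y / ((1 / (Fintype.card X : ℝ)) * ∑ x', W x' y))

lemma symCap_eq_capf (W : X → Y → ℝ) :
    symCap W = (1 / (Fintype.card X : ℝ)) * ∑ x, ∑' y, capf W x y := by
  unfold symCap capf
  rw [Finset.mul_sum]
  refine Finset.sum_congr rfl (fun x _ => ?_)
  rw [← tsum_mul_left]
  refine tsum_congr (fun y => by ring)

variable (hq : 2 ≤ Fintype.card X) (hW : IsChannel W)
include hq

lemma cardQ_pos : (0:ℝ) < (Fintype.card X : ℝ) := by positivity

lemma one_lt_cardQ : (1:ℝ) < (Fintype.card X : ℝ) := by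
  exact_mod_cast lt_of_lt_of_le one_lt_two hq

lemma logQ_pos : 0 < Real.log (Fintype.card X : ℝ) := Real.log_pos (one_lt_cardQ hq)

include hW

lemma capf_le (x : X) (y : Y) : capf W x y ≤ W x y := by
  set Q := (Fintype.card X : ℝ)
  have hQ : 1 < Q := one_lt_cardQ hq
  rcases eq_or_lt_of_le (hW.1 x y) with h0 | h0
  · simp [capf, ← h0]
  have hS : 0 < ∑ x', W x' y := lt_of_lt_of_le h0 (le_S hW x y)
  have hr : 0 < W x y / ((1/Q) * ∑ x', W x' y) := by positivity
  have hrQ : W x y / ((1/Q) * ∑ x', W x' y) ≤ Q := by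
    rw [div_le_iff₀ (by positivity)]
    calc W x y ≤ ∑ x', W x' y := le_S hW x y
      _ = Q * (1/Q * ∑ x', W x' y) := by field_simp
  have hlb : Real.logb Q (W x y / ((1/Q) * ∑ x', W x' y)) ≤ 1 := by
    calc Real.logb Q _ ≤ Real.logb Q Q := Real.logb_le_logb_of_le hQ hr hrQ
      _ = 1 := Real.logb_self_eq_one hQ
  calc capf W x y ≤ W x y * 1 := mul_le_mul_of_nonneg_left hlb h0.le
    _ = W x y := mul_one _

lemma capf_ge (x : X) (y : Y) :
    (2 / Real.log (Fintype.card X : ℝ)) *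
      (W x y - Real.sqrt (W x y * ((∑ x', W x' y) / (Fintype.card X : ℝ)))) ≤
    capf W x y := by
  set Q := (Fintype.card X : ℝ) with hQdef
  have hQ : 0 < Q := cardQ_pos hq
  have hlQ : 0 < Real.log Q := logQ_pos hq
  have key := log_ineq (b := W x y) (m := (∑ x', W x' y) / Q) (hW.1 x y)
    (fun h => by
      have hS : (∑ x', W x' y) = 0 := by
        field_simp at h
        rw [mul_zero] at h
        exact h
      have := le_S hW x y
      have := hW.1 x y
      linarith)
    (div_nonneg (Finset.sum_nonneg fun x' _ => hW.1 x' y) hQ.le)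
  have hrw : capf W x y = W x y * Real.log (W x y / ((∑ x', W x' y) / Q)) / Real.log Q := by
    unfold capf
    rw [Real.logb, show (1/Q) * ∑ x', W x' y = (∑ x', W x' y) / Q from by ring]
    ring
  rw [hrw, div_mul_eq_mul_div, div_le_div_iff_of_pos_right hlQ]
  linarith

lemma capf_summable (x : X) : Summable (capf W x) := by
  set Q := (Fintype.card X : ℝ)
  have hlQ : 0 < Real.log Q := logQ_pos hq
  refine summable_of_le_of_le (g := fun y =>
      (2 / Real.log Q) * (W x y - Real.sqrt (W x y * ((∑ x', W x' y) / Q))))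
    (h := fun y => W x y) (fun y => capf_ge hq hW x y) (fun y => capf_le hq hW x y)
    ?_ (summable_row hW x)
  apply Summable.mul_left
  apply Summable.sub (summable_row hW x)
  refine Summable.of_nonneg_of_le (fun y => Real.sqrt_nonneg _)
    (fun y => sqrt_mul_le (hW.1 x y)
      (div_nonneg (Finset.sum_nonneg fun x' _ => hW.1 x' y)
        (by positivity : (0:ℝ) ≤ Q))) ?_
  have h1 : Summable (fun y => (∑ x', W x' y) / Q) := (summable_S hW).div_const Q
  simpa using ((summable_row hW x).add h1).div_const 2

end cap

/-! ### the product channel and the capacity-gap identity -/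

section gap
variable {X Y : Type*} [Fintype X]

/-- the combined channel `W'(y₁,y₂|x) = W(y₁|σx) W(y₂|τx)` -/
def Wp (W : X → Y → ℝ) (σ τ : Equiv.Perm X) : X → Y × Y → ℝ :=
  fun x p => W (σ x) p.1 * W (τ x) p.2

def SAf (W : X → Y → ℝ) (σ : Equiv.Perm X) : Y → ℝ := fun y => ∑ x, W (σ x) y

def Spf (W : X → Y → ℝ) (σ τ : Equiv.Perm X) : Y × Y → ℝ :=
  fun p => ∑ x, W (σ x) p.1 * W (τ x) p.2

def gf (W : X → Y → ℝ) (σ τ : Equiv.Perm X) (x : X) (p : Y × Y) : ℝ :=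
  W (σ x) p.1 * W (τ x) p.2 *
    Real.log (W (τ x) p.2 * SAf W σ p.1 / Spf W σ τ p)

def kf (W : X → Y → ℝ) (σ τ : Equiv.Perm X) (x : X) (y1 : Y) : ℝ :=
  ∑' y2, W (τ x) y2 * Real.log (W (τ x) y2 * SAf W σ y1 / Spf W σ τ (y1, y2))

variable {W : X → Y → ℝ} (hW : IsChannel W) (σ τ : Equiv.Perm X)

include hW in
lemma isChannel_perm : IsChannel (fun x => W (σ x)) :=
  ⟨fun x y => hW.1 (σ x) y, fun x => hW.2 (σ x)⟩

lemma sumP_eq (y : Y) : ∑ x, W (σ x) y = ∑ x, W x y := Equiv.sum_comp σ (fun x' => W x' y)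

lemma symCap_perm : symCap (fun x => W (σ x)) = symCap W := by
  unfold symCap
  refine Fintype.sum_equiv σ _ _ fun x => ?_
  exact tsum_congr fun y => by rw [sumP_eq σ y]

include hW in
lemma isChannel_Wp : IsChannel (Wp W σ τ) := by
  constructor
  · exact fun x p => mul_nonneg (hW.1 _ _) (hW.1 _ _)
  · intro x
    have hs : Summable (Wp W σ τ x) :=
      Summable.mul_of_nonneg (summable_row hW (σ x)) (summable_row hW (τ x))
        (fun y => hW.1 _ y) (fun y => hW.1 _ y)
    rw [hs.hasSum_iff]
    have habs : ∀ x0 : X, Summable (fun y => ‖W x0 y‖) := fun x0 => by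
      simpa [Real.norm_eq_abs] using (summable_row hW x0).abs
    calc ∑' p, Wp W σ τ x p
        = (∑' y, W (σ x) y) * (∑' y, W (τ x) y) :=
          (tsum_mul_tsum_of_summable_norm (habs (σ x)) (habs (τ x))).symm
      _ = 1 := by rw [(hW.2 (σ x)).tsum_eq, (hW.2 (τ x)).tsum_eq, mul_one]

lemma ptdiff {Q a b sa s' : ℝ} (hQ : 1 < Q) (ha : 0 ≤ a) (hb : 0 ≤ b) (hsa : a ≤ sa)
    (hs' : a * b ≤ s') :
    a * b * Real.logb Q (a * b / ((1/Q) * s')) - (a * Real.logb Q (a / ((1/Q) * sa))) * b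
      = a * b * Real.log (b * sa / s') * (Real.log Q)⁻¹ := by
  rcases eq_or_lt_of_le ha with ha0 | ha0
  · simp [← ha0]
  rcases eq_or_lt_of_le hb with hb0 | hb0
  · simp [← hb0]
  have hQ0 : 0 < Q := lt_trans one_pos hQ
  have hsa0 : 0 < sa := lt_of_lt_of_le ha0 hsa
  have hs'0 : 0 < s' := lt_of_lt_of_le (mul_pos ha0 hb0) hs'
  have h1 : a * b / ((1/Q) * s') / (a / ((1/Q) * sa)) = b * sa / s' := by
    field_simp
  have h2 : Real.log (a * b / ((1/Q) * s')) - Real.log (a / ((1/Q) * sa))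
      = Real.log (b * sa / s') := by
    rw [← Real.log_div (by positivity) (by positivity), h1]
  simp only [Real.logb]
  rw [← h2]
  ring

variable (hq : 2 ≤ Fintype.card X)
include hW hq

lemma capf_diff (x : X) :
    Summable (gf W σ τ x) ∧
      (∑' p, capf (Wp W σ τ) x p) - (∑' y, capf (fun x0 => W (σ x0)) x y)
        = (∑' p, gf W σ τ x p) * (Real.log (Fintype.card X : ℝ))⁻¹ := by
  set Q : ℝ := (Fintype.card X : ℝ) with hQdef
  have hQ : 1 < Q := one_lt_cardQ hq
  have hlQ : 0 < Real.log Q := logQ_pos hq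
  have hA : IsChannel (fun x0 => W (σ x0)) := isChannel_perm hW σ
  have hWp : IsChannel (Wp W σ τ) := isChannel_Wp hW σ τ
  have habs : ∀ x0 : X, Summable (fun y => ‖W x0 y‖) := fun x0 => by
    simpa [Real.norm_eq_abs] using (summable_row hW x0).abs
  set f2 : Y × Y → ℝ := fun p => capf (fun x0 => W (σ x0)) x p.1 * W (τ x) p.2 with hf2def
  have hf2 : Summable f2 :=
    summable_mul_of_summable_norm
      (by simpa [Real.norm_eq_abs] using (capf_summable hq hA x).abs) (habs (τ x))
  have ht2 : ∑' p, f2 p = ∑' y, capf (fun x0 => W (σ x0)) x y := by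
    rw [hf2def]
    rw [← tsum_mul_tsum_of_summable_norm
      (by simpa [Real.norm_eq_abs] using (capf_summable hq hA x).abs) (habs (τ x)),
      (hW.2 (τ x)).tsum_eq, mul_one]
  have hpt : ∀ p, capf (Wp W σ τ) x p - f2 p = gf W σ τ x p * (Real.log Q)⁻¹ := by
    intro p
    exact ptdiff hQ (hW.1 (σ x) p.1) (hW.1 (τ x) p.2) (le_S hA x p.1) (le_S hWp x p)
  have hsub : Summable (fun p => capf (Wp W σ τ) x p - f2 p) :=
    (capf_summable hq hWp x).sub hf2
  have hgf : Summable (gf W σ τ x) := by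
    refine (hsub.mul_right (Real.log Q)).congr (fun p => ?_)
    rw [hpt p]
    field_simp
  refine ⟨hgf, ?_⟩
  rw [← ht2, ← Summable.tsum_sub (capf_summable hq hWp x) hf2]
  rw [tsum_congr hpt, tsum_mul_right]

lemma gap_identity :
    symCap (Wp W σ τ) - symCap W =
      (1 / ((Fintype.card X : ℝ) * Real.log (Fintype.card X : ℝ))) *
        ∑ x, ∑' p, gf W σ τ x p := by
  set Q : ℝ := (Fintype.card X : ℝ) with hQdef
  have hlQ : 0 < Real.log Q := logQ_pos hq
  rw [← symCap_perm σ (W := W), symCap_eq_capf, symCap_eq_capf]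
  rw [← mul_sub, ← Finset.sum_sub_distrib]
  rw [Finset.sum_congr rfl (fun x _ => (capf_diff hW σ τ hq x).2)]
  rw [← Finset.sum_mul]
  field_simp
  rw [← hQdef, mul_div_assoc, div_self hlQ.ne', mul_one, mul_div_cancel_left₀ _ (cardQ_pos hq).ne']

end gap

/-! ### generic facts about pairs of distributions -/

section dists
variable {Y : Type*} {P Q : Y → ℝ}

lemma summable_sqrt_mul₂ (hP0 : ∀ y, 0 ≤ P y) (hQ0 : ∀ y, 0 ≤ Q y)
    (hP : Summable P) (hQ : Summable Q) : Summable (fun y => Real.sqrt (P y * Q y)) :=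
  Summable.of_nonneg_of_le (fun y => Real.sqrt_nonneg _)
    (fun y => sqrt_mul_le (hP0 y) (hQ0 y)) (by simpa using (hP.add hQ).div_const 2)

lemma tsum_sqrt_mul_le_one (hP0 : ∀ y, 0 ≤ P y) (hQ0 : ∀ y, 0 ≤ Q y)
    (hP : HasSum P 1) (hQ : HasSum Q 1) : ∑' y, Real.sqrt (P y * Q y) ≤ 1 := by
  have h := Summable.tsum_le_tsum (fun y => sqrt_mul_le (hP0 y) (hQ0 y))
    (summable_sqrt_mul₂ hP0 hQ0 hP.summable hQ.summable)
    (by simpa using (hP.summable.add hQ.summable).div_const 2)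
  calc ∑' y, Real.sqrt (P y * Q y) ≤ ∑' y, (P y + Q y)/2 := h
    _ = 1 := by
        rw [tsum_div_const, Summable.tsum_add hP.summable hQ.summable, hP.tsum_eq, hQ.tsum_eq]
        norm_num

lemma summable_hellinger (hP0 : ∀ y, 0 ≤ P y) (hQ0 : ∀ y, 0 ≤ Q y)
    (hP : Summable P) (hQ : Summable Q) :
    Summable (fun y => (Real.sqrt (P y) - Real.sqrt (Q y))^2) := by
  have h : ∀ y, (Real.sqrt (P y) - Real.sqrt (Q y))^2
      = P y + Q y - 2 * Real.sqrt (P y * Q y) := by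
    intro y
    rw [sub_sq, Real.sq_sqrt (hP0 y), Real.sq_sqrt (hQ0 y), Real.sqrt_mul (hP0 y)]
    ring
  exact Summable.congr
    (((hP.add hQ).sub ((summable_sqrt_mul₂ hP0 hQ0 hP hQ).mul_left 2)))
    (fun y => (h y).symm)

lemma tsum_hellinger_eq (hP0 : ∀ y, 0 ≤ P y) (hQ0 : ∀ y, 0 ≤ Q y)
    (hP : HasSum P 1) (hQ : HasSum Q 1) :
    ∑' y, (Real.sqrt (P y) - Real.sqrt (Q y))^2
      = 2 - 2 * ∑' y, Real.sqrt (P y * Q y) := by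
  have h : ∀ y, (Real.sqrt (P y) - Real.sqrt (Q y))^2
      = P y + Q y - 2 * Real.sqrt (P y * Q y) := by
    intro y
    rw [sub_sq, Real.sq_sqrt (hP0 y), Real.sq_sqrt (hQ0 y), Real.sqrt_mul (hP0 y)]
    ring
  rw [tsum_congr h,
    Summable.tsum_sub ((hP.summable.add hQ.summable))
      ((summable_sqrt_mul₂ hP0 hQ0 hP.summable hQ.summable).mul_left 2),
    Summable.tsum_add hP.summable hQ.summable, hP.tsum_eq, hQ.tsum_eq, tsum_mul_left]
  norm_num

end dists

section gap2
variable {X Y : Type*} [Fintype X] {W : X → Y → ℝ} (hW : IsChannel W) (σ τ : Equiv.Perm X)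
  (hq : 2 ≤ Fintype.card X)
include hW hq

lemma gf_curry (x : X) :
    Summable (fun y1 => W (σ x) y1 * kf W σ τ x y1) ∧
    ∑' p, gf W σ τ x p = ∑' y1, W (σ x) y1 * kf W σ τ x y1 := by
  have hgf := (capf_diff hW σ τ hq x).1
  have hcong : ∀ y1, (∑' y2, gf W σ τ x (y1, y2)) = W (σ x) y1 * kf W σ τ x y1 := by
    intro y1
    rw [kf, ← tsum_mul_left]
    exact tsum_congr fun y2 => by simp only [gf]; ring
  constructor
  · exact hgf.prod.congr hcong
  · rw [Summable.tsum_prod' hgf (fun y1 => hgf.prod_factor y1)]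
    exact tsum_congr hcong

lemma F_lower (x₀ x₀' : X) (y1 : Y) :
    2 * (1 - Zb W (τ x₀) (τ x₀')) *
      (if 0 < SAf W σ y1 then W (σ x₀) y1 * W (σ x₀') y1 / SAf W σ y1 else 0)
      ≤ ∑ x, W (σ x) y1 * kf W σ τ x y1 := by
  have hs0 : 0 ≤ SAf W σ y1 := Finset.sum_nonneg fun x _ => hW.1 _ _
  have hZB1 : Zb W (τ x₀) (τ x₀') ≤ 1 := Zb_le_one hW
  by_cases hs : 0 < SAf W σ y1
  swap
  · rw [if_neg hs, mul_zero]
    have hz : SAf W σ y1 = 0 := le_antisymm (not_lt.1 hs) hs0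
    have hA0 : ∀ x : X, W (σ x) y1 = 0 := fun x =>
      (Finset.sum_eq_zero_iff_of_nonneg (fun x _ => hW.1 (σ x) y1)).1 hz x (Finset.mem_univ x)
    refine Finset.sum_nonneg fun x _ => ?_
    rw [hA0 x, zero_mul]
  set M : Y → ℝ := fun y2 => Spf W σ τ (y1, y2) / SAf W σ y1 with hMdef
  have hM0 : ∀ y2, 0 ≤ M y2 := fun y2 =>
    div_nonneg (Finset.sum_nonneg fun x _ => mul_nonneg (hW.1 _ _) (hW.1 _ _)) hs0
  have hSp : HasSum (fun y2 => Spf W σ τ (y1, y2)) (SAf W σ y1) := by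
    have h1 : ∀ x : X, HasSum (fun y2 => W (σ x) y1 * W (τ x) y2) (W (σ x) y1 * 1) :=
      fun x => (hW.2 (τ x)).mul_left _
    have h2 := hasSum_sum (fun x (_ : x ∈ Finset.univ) => h1 x)
    simpa [Spf, SAf] using h2
  have hM : HasSum M 1 := by
    rw [hMdef]
    have := hSp.div_const (SAf W σ y1)
    rwa [div_self hs.ne'] at this
  have hMzero : ∀ (x : X) y2, M y2 = 0 → W (σ x) y1 * W (τ x) y2 = 0 := by
    intro x y2 hM0'
    have hSp0 : Spf W σ τ (y1, y2) = 0 := by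
      rcases div_eq_zero_iff.1 hM0' with h | h
      · exact h
      · exact absurd h hs.ne'
    exact (Finset.sum_eq_zero_iff_of_nonneg
      (fun x _ => mul_nonneg (hW.1 _ _) (hW.1 _ _))).1 hSp0 x (Finset.mem_univ x)
  have hkf : ∀ x : X, 0 < W (σ x) y1 →
      ∑' y2, (Real.sqrt (W (τ x) y2) - Real.sqrt (M y2))^2 ≤ kf W σ τ x y1 := by
    intro x hA
    have hBM : ∀ y2, M y2 = 0 → W (τ x) y2 = 0 := fun y2 h => by
      rcases mul_eq_zero.1 (hMzero x y2 h) with h' | h'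
      · exact absurd h' hA.ne'
      · exact h'
    have hlog : ∀ y2, 2 * (W (τ x) y2 - Real.sqrt (W (τ x) y2 * M y2))
        ≤ W (τ x) y2 * Real.log (W (τ x) y2 * SAf W σ y1 / Spf W σ τ (y1, y2)) := by
      intro y2
      have h := log_ineq (hW.1 (τ x) y2) (hBM y2) (hM0 y2)
      have harg : W (τ x) y2 / M y2 = W (τ x) y2 * SAf W σ y1 / Spf W σ τ (y1, y2) := by
        rw [hMdef]
        rw [div_div_eq_mul_div]
      rwa [harg] at h
    have hslice : Summable (fun y2 => gf W σ τ x (y1, y2)) :=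
      ((capf_diff hW σ τ hq x).1).prod_factor y1
    have hsum2 : Summable (fun y2 =>
        W (τ x) y2 * Real.log (W (τ x) y2 * SAf W σ y1 / Spf W σ τ (y1, y2))) := by
      refine (hslice.mul_left (W (σ x) y1)⁻¹).congr fun y2 => ?_
      simp only [gf]
      field_simp
    have hsqs : Summable (fun y2 => Real.sqrt (W (τ x) y2 * M y2)) :=
      summable_sqrt_mul₂ (hW.1 (τ x)) hM0 (summable_row hW (τ x)) hM.summable
    have hsumL : Summable (fun y2 => 2 * (W (τ x) y2 - Real.sqrt (W (τ x) y2 * M y2))) :=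
      ((summable_row hW (τ x)).sub hsqs).mul_left 2
    have h1 : ∑' y2, 2 * (W (τ x) y2 - Real.sqrt (W (τ x) y2 * M y2)) ≤ kf W σ τ x y1 := by
      rw [kf]
      exact Summable.tsum_le_tsum hlog hsumL hsum2
    have h2 : ∑' y2, 2 * (W (τ x) y2 - Real.sqrt (W (τ x) y2 * M y2))
        = 2 - 2 * ∑' y2, Real.sqrt (W (τ x) y2 * M y2) := by
      rw [tsum_mul_left, Summable.tsum_sub (summable_row hW (τ x)) hsqs, (hW.2 (τ x)).tsum_eq]
      ring
    have h3 := tsum_hellinger_eq (hW.1 (τ x)) hM0 (hW.2 (τ x)) hM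
    rw [h3]
    linarith
  have hterm0 : ∀ x : X, 0 ≤ W (σ x) y1 * kf W σ τ x y1 := by
    intro x
    rcases eq_or_lt_of_le (hW.1 (σ x) y1) with h0 | h0
    · rw [← h0, zero_mul]
    · have hH : (0:ℝ) ≤ ∑' y2, (Real.sqrt (W (τ x) y2) - Real.sqrt (M y2))^2 :=
        tsum_nonneg fun _ => sq_nonneg _
      exact mul_nonneg h0.le (le_trans hH (hkf x h0))
  rw [if_pos hs]
  rcases eq_or_ne x₀ x₀' with heq | hne
  · rw [← heq, Zb_self hW (τ x₀)]
    simpa using Finset.sum_nonneg fun x _ => hterm0 x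
  rcases eq_or_lt_of_le (hW.1 (σ x₀) y1) with hA0 | hA0
  · rw [← hA0]
    simpa using Finset.sum_nonneg fun x _ => hterm0 x
  rcases eq_or_lt_of_le (hW.1 (σ x₀') y1) with hA0' | hA0'
  · rw [← hA0']
    simpa using Finset.sum_nonneg fun x _ => hterm0 x
  have hpair : W (σ x₀) y1 + W (σ x₀') y1 ≤ SAf W σ y1 := by
    have := Finset.sum_le_sum_of_subset_of_nonneg (Finset.subset_univ {x₀, x₀'})
      (fun x _ _ => hW.1 (σ x) y1)
    rwa [Finset.sum_pair hne] at this
  have h2pt : ∀ y2, (W (σ x₀) y1 * W (σ x₀') y1 / SAf W σ y1) *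
        (Real.sqrt (W (τ x₀) y2) - Real.sqrt (W (τ x₀') y2))^2
      ≤ W (σ x₀) y1 * (Real.sqrt (W (τ x₀) y2) - Real.sqrt (M y2))^2
        + W (σ x₀') y1 * (Real.sqrt (W (τ x₀') y2) - Real.sqrt (M y2))^2 :=
    fun y2 => two_point (hW.1 _ _) (hW.1 _ _) hpair hs
  have hsumH : ∀ x : X, Summable (fun y2 => (Real.sqrt (W (τ x) y2) - Real.sqrt (M y2))^2) :=
    fun x => summable_hellinger (hW.1 (τ x)) hM0 (summable_row hW (τ x)) hM.summable
  have hsumH2 : Summable (fun y2 => (Real.sqrt (W (τ x₀) y2) - Real.sqrt (W (τ x₀') y2))^2) :=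
    summable_hellinger (hW.1 _) (hW.1 _) (summable_row hW _) (summable_row hW _)
  have hT := Summable.tsum_le_tsum h2pt (hsumH2.mul_left _)
    (((hsumH x₀).mul_left _).add ((hsumH x₀').mul_left _))
  rw [tsum_mul_left, tsum_hellinger_eq (hW.1 _) (hW.1 _) (hW.2 (τ x₀)) (hW.2 (τ x₀')),
    Summable.tsum_add ((hsumH x₀).mul_left _) ((hsumH x₀').mul_left _), tsum_mul_left,
    tsum_mul_left] at hT
  have m1 := mul_le_mul_of_nonneg_left (hkf x₀ hA0) (hW.1 (σ x₀) y1)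
  have m2 := mul_le_mul_of_nonneg_left (hkf x₀' hA0') (hW.1 (σ x₀') y1)
  have hsum_pair : W (σ x₀) y1 * kf W σ τ x₀ y1 + W (σ x₀') y1 * kf W σ τ x₀' y1
      ≤ ∑ x, W (σ x) y1 * kf W σ τ x y1 := by
    have := Finset.sum_le_sum_of_subset_of_nonneg (Finset.subset_univ {x₀, x₀'})
      (fun x _ _ => hterm0 x)
    rwa [Finset.sum_pair hne] at this
  have e1 : Zb W (τ x₀) (τ x₀') = ∑' y2, Real.sqrt (W (τ x₀) y2 * W (τ x₀') y2) := rfl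
  rw [← e1] at hT
  linarith

lemma gap_lower (x₀ x₀' : X) :
    2 / ((Fintype.card X : ℝ)^2 * Real.log (Fintype.card X : ℝ)) *
      (Zb W (σ x₀) (σ x₀'))^2 * (1 - Zb W (τ x₀) (τ x₀'))
      ≤ symCap (Wp W σ τ) - symCap W := by
  classical
  set Q : ℝ := (Fintype.card X : ℝ) with hQdef
  have hQ0 : 0 < Q := cardQ_pos hq
  have hlQ : 0 < Real.log Q := logQ_pos hq
  have hA : IsChannel (fun x0 => W (σ x0)) := isChannel_perm hW σ
  set ZA := Zb W (σ x₀) (σ x₀') with hZAdef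
  set ZB := Zb W (τ x₀) (τ x₀') with hZBdef
  have hZA0 : 0 ≤ ZA := Zb_nonneg
  have hZB1 : ZB ≤ 1 := Zb_le_one hW
  set r : Y → ℝ := fun y1 =>
    if 0 < SAf W σ y1 then W (σ x₀) y1 * W (σ x₀') y1 / SAf W σ y1 else 0 with hrdef
  have hr0 : ∀ y1, 0 ≤ r y1 := by
    intro y1
    simp only [hrdef]
    split
    · exact div_nonneg (mul_nonneg (hW.1 _ _) (hW.1 _ _)) (le_of_lt (by assumption))
    · exact le_refl 0
  have hrle : ∀ y1, r y1 ≤ W (σ x₀) y1 := by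
    intro y1
    simp only [hrdef]
    split
    · rename_i hs
      rw [div_le_iff₀ hs]
      have h1 : W (σ x₀') y1 ≤ SAf W σ y1 := le_S hA x₀' y1
      nlinarith [hW.1 (σ x₀) y1, hW.1 (σ x₀') y1]
    · exact hW.1 _ _
  have hrsum : Summable r := Summable.of_nonneg_of_le hr0 hrle (summable_row hW (σ x₀))
  set R := ∑' y1, r y1 with hRdef
  have hR0 : 0 ≤ R := tsum_nonneg hr0
  -- Cauchy–Schwarz via AM–GM: R ≥ ZA² / Q
  have hkey : ∀ t : ℝ, 0 < t → ZA ≤ (t * R + Q / t) / 2 := by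
    intro t ht
    have hpt : ∀ y1, Real.sqrt (W (σ x₀) y1 * W (σ x₀') y1)
        ≤ (t * r y1 + SAf W σ y1 / t) / 2 := by
      intro y1
      by_cases hs : 0 < SAf W σ y1
      · have harg : W (σ x₀) y1 * W (σ x₀') y1
            = (t * r y1) * (SAf W σ y1 / t) := by
          simp only [hrdef, if_pos hs]
          field_simp
        rw [harg]
        exact sqrt_mul_le (mul_nonneg ht.le (hr0 y1)) (by positivity)
      · have hz : SAf W σ y1 = 0 :=
          le_antisymm (not_lt.1 hs) (Finset.sum_nonneg fun x _ => hW.1 _ _)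
        have hA0 : W (σ x₀) y1 = 0 :=
          (Finset.sum_eq_zero_iff_of_nonneg (fun x _ => hW.1 (σ x) y1)).1 hz x₀
            (Finset.mem_univ x₀)
        simp only [hrdef, if_neg hs]
        simp [hA0, hz]
    have hsum1 : Summable (fun y1 => (t * r y1 + SAf W σ y1 / t) / 2) :=
      ((hrsum.mul_left t).add ((summable_S hA).div_const t)).div_const 2
    have h := Summable.tsum_le_tsum hpt (summable_sqrt_mul hW (σ x₀) (σ x₀')) hsum1
    have hSsum : Summable (fun y1 => SAf W σ y1) := summable_S hA
    have hQsum : ∑' y1, SAf W σ y1 = Q := tsum_S hA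
    calc ZA ≤ ∑' y1, (t * r y1 + SAf W σ y1 / t) / 2 := h
      _ = (t * R + Q / t) / 2 := by
          rw [tsum_div_const, Summable.tsum_add (hrsum.mul_left t) (hSsum.div_const t),
            tsum_mul_left, tsum_div_const, ← hRdef, hQsum]
  have hRZ : ZA^2 / Q ≤ R := by
    rcases eq_or_lt_of_le hZA0 with h0 | h0
    · rw [← h0]
      simpa using hR0
    · have h := hkey (Q / ZA) (by positivity)
      have h2 : Q / (Q / ZA) = ZA := by field_simp
      rw [h2] at h
      rw [div_le_iff₀ hQ0]
      have h4 := mul_le_mul_of_nonneg_right h h0.le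
      have h3 : (Q / ZA * R + ZA) / 2 * ZA = (Q * R + ZA^2) / 2 := by
        field_simp
      rw [h3] at h4
      nlinarith
  -- sum the per-output bound
  have hFs : Summable (fun y1 => ∑ x, W (σ x) y1 * kf W σ τ x y1) :=
    summable_sum fun x _ => (gf_curry hW σ τ hq x).1
  have hstep : 2 * (1 - ZB) * R ≤ ∑' y1, ∑ x, W (σ x) y1 * kf W σ τ x y1 := by
    have h := Summable.tsum_le_tsum (fun y1 => F_lower hW σ τ hq x₀ x₀' y1)
      (hrsum.mul_left (2 * (1 - ZB))) hFs
    rwa [tsum_mul_left] at h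
  rw [gap_identity hW σ τ hq]
  rw [Finset.sum_congr rfl (fun x _ => (gf_curry hW σ τ hq x).2),
    ← Summable.tsum_finsetSum (fun x _ => (gf_curry hW σ τ hq x).1)]
  have hfinal : 2 * (1 - ZB) * (ZA^2 / Q) ≤ ∑' y1, ∑ x, W (σ x) y1 * kf W σ τ x y1 := by
    refine le_trans ?_ hstep
    exact mul_le_mul_of_nonneg_left hRZ (by nlinarith)
  rw [show 2 / (Q^2 * Real.log Q) * ZA^2 * (1 - ZB)
      = 1 / (Q * Real.log Q) * (2 * (1 - ZB) * (ZA^2 / Q)) from by field_simp]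
  exact mul_le_mul_of_nonneg_left hfinal (by positivity)

end gap2


/-- if `I(W'_n) - I(W_n) → 0` then eventually every average
Bhattacharyya parameter `Z^{τ∘σ⁻¹}_{x,x'}(W_n)` is outside `(δ, 1-δ)`. -/
theorem polarization_lemma {X : Type*} [Fintype X] (hq : 2 ≤ Fintype.card X)
    {Yn : ℕ → Type*} [∀ n, Countable (Yn n)]
    (Wn : ∀ n, X → Yn n → ℝ) (hWn : ∀ n, IsChannel (Wn n))
    (σ τ : Equiv.Perm X)
    (hconv : Tendsto (fun n =>
        symCap (fun (x : X) (p : Yn n × Yn n) => Wn n (σ x) p.1 * Wn n (τ x) p.2) -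
          symCap (Wn n)) atTop (nhds 0)) :
    ∀ δ ∈ Set.Ioo (0 : ℝ) (1 / 2), ∃ m, ∀ n, m ≤ n → ∀ x x' : X,
      ZbAvgPerm (Wn n) (τ * σ⁻¹) x x' ∉ Set.Ioo δ (1 - δ) := by
  intro δ hδ
  obtain ⟨hδ0, hδhalf⟩ := hδ
  set Q : ℝ := (Fintype.card X : ℝ) with hQdef
  have hQ0 : (0:ℝ) < Q := cardQ_pos hq
  have hlQ : 0 < Real.log Q := logQ_pos hq
  set c : ℝ := 2 / (Q^2 * Real.log Q) with hcdef
  have hc : 0 < c := by positivity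
  have hε : 0 < c * δ^3 := by positivity
  obtain ⟨m, hm⟩ := (Metric.tendsto_atTop.1 hconv) (c * δ^3) hε
  refine ⟨m, fun n hn x x' hmem => ?_⟩
  obtain ⟨h1, h2⟩ := hmem
  set ρ : Equiv.Perm X := τ * σ⁻¹ with hρdef
  have hWc := hWn n
  -- the capacity gap is small
  have hD : symCap (Wp (Wn n) σ τ) - symCap (Wn n) < c * δ^3 := by
    have hD0 := hm n hn
    rw [Real.dist_eq, sub_zero] at hD0
    exact lt_of_le_of_lt (le_abs_self _) hD0
  -- per-pair consequence
  have key : ∀ u u' : X,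
      (Zb (Wn n) u u')^2 * (1 - Zb (Wn n) (ρ u) (ρ u')) < δ^3 := by
    intro u u'
    have hg := gap_lower hWc σ τ hq (σ⁻¹ u) (σ⁻¹ u')
    have he1 : σ (σ⁻¹ u) = u := Equiv.apply_symm_apply σ u
    have he2 : σ (σ⁻¹ u') = u' := Equiv.apply_symm_apply σ u'
    have he3 : τ (σ⁻¹ u) = ρ u := rfl
    have he4 : τ (σ⁻¹ u') = ρ u' := rfl
    rw [he1, he2, he3, he4] at hg
    have hlt : c * ((Zb (Wn n) u u')^2 * (1 - Zb (Wn n) (ρ u) (ρ u'))) < c * δ^3 := by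
      calc c * ((Zb (Wn n) u u')^2 * (1 - Zb (Wn n) (ρ u) (ρ u')))
          = c * (Zb (Wn n) u u')^2 * (1 - Zb (Wn n) (ρ u) (ρ u')) := by ring
        _ ≤ symCap (Wp (Wn n) σ τ) - symCap (Wn n) := hg
        _ < c * δ^3 := hD
    exact (mul_lt_mul_iff_right₀ hc).1 hlt
  set N : ℕ := (Fintype.card X).factorial with hNdef
  have hNpos : 0 < N := Nat.factorial_pos _
  set Zi : ℕ → ℝ := fun i => Zb (Wn n) ((ρ ^ i) x) ((ρ ^ i) x') with hZidef
  have hZ0 : ∀ i, 0 ≤ Zi i := fun i => Zb_nonneg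
  have hZ1 : ∀ i, Zi i ≤ 1 := fun i => Zb_le_one hWc
  have hord : ρ ^ N = 1 := by
    have h := pow_card_eq_one (G := Equiv.Perm X) (x := ρ)
    have hcard : Fintype.card (Equiv.Perm X) = N := by
      rw [hNdef, Fintype.card_perm]
    rwa [hcard] at h
  have hper : ∀ i, Zi (i + N) = Zi i := by
    intro i
    have : ρ ^ (i + N) = ρ ^ i := by rw [pow_add, hord, mul_one]
    simp only [hZidef, this]
  have key2 : ∀ i, δ ≤ Zi i → 1 - δ ≤ Zi (i + 1) := by
    intro i hZi
    have hk := key ((ρ ^ i) x) ((ρ ^ i) x')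
    have hes : ∀ z : X, ρ ((ρ ^ i) z) = (ρ ^ (i+1)) z := by
      intro z
      rw [pow_succ']
      rfl
    rw [hes x, hes x'] at hk
    have h1' : 0 ≤ 1 - Zi (i+1) := by linarith [hZ1 (i+1)]
    have h2' : δ^2 ≤ (Zi i)^2 := by nlinarith [hZ0 i]
    have h3' : δ^2 * (1 - Zi (i+1)) ≤ (Zi i)^2 * (1 - Zi (i+1)) :=
      mul_le_mul_of_nonneg_right h2' h1'
    nlinarith
  -- unfold the average
  have havg : ZbAvgPerm (Wn n) ρ x x' = (1 / (N:ℝ)) * ∑ i ∈ Finset.range N, Zi i := rfl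
  rw [hρdef] at havg
  rw [havg] at h1 h2
  have hNR : (0:ℝ) < (N:ℝ) := by exact_mod_cast hNpos
  -- there is a large Zi
  have hex : ∃ i ∈ Finset.range N, δ < Zi i := by
    by_contra hno
    push_neg at hno
    have hsum : ∑ i ∈ Finset.range N, Zi i ≤ (N:ℝ) * δ := by
      calc ∑ i ∈ Finset.range N, Zi i ≤ ∑ i ∈ Finset.range N, δ :=
            Finset.sum_le_sum fun i hi => hno i hi
        _ = (N:ℝ) * δ := by simp [mul_comm]
    have : (1 / (N:ℝ)) * ∑ i ∈ Finset.range N, Zi i ≤ δ := by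
      rw [div_mul_eq_mul_div, one_mul, div_le_iff₀ hNR]
      linarith [hsum]
    linarith
  obtain ⟨i₀, hi₀, hZi₀⟩ := hex
  rw [Finset.mem_range] at hi₀
  -- propagation
  have step : ∀ k : ℕ, 1 - δ ≤ Zi (i₀ + (k + 1)) := by
    intro k
    induction k with
    | zero => exact key2 i₀ hZi₀.le
    | succ j ih =>
      have hδ' : δ ≤ Zi (i₀ + (j + 1)) := by linarith
      have := key2 _ hδ'
      rwa [show i₀ + (j + 1) + 1 = i₀ + (j + 1 + 1) by ring] at this
  have hall : ∀ j ∈ Finset.range N, 1 - δ ≤ Zi j := by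
    intro j hj
    rw [Finset.mem_range] at hj
    have hj' : Zi j = Zi (i₀ + (j + N - i₀ - 1 + 1)) := by
      rw [show i₀ + (j + N - i₀ - 1 + 1) = j + N by omega]
      exact (hper j).symm
    rw [hj']
    exact step _
  have hsum : (N:ℝ) * (1 - δ) ≤ ∑ i ∈ Finset.range N, Zi i := by
    calc (N:ℝ) * (1 - δ) = ∑ _i ∈ Finset.range N, (1 - δ) := by rw [Finset.sum_const, Finset.card_range, nsmul_eq_mul]
      _ ≤ ∑ i ∈ Finset.range N, Zi i := Finset.sum_le_sum hall
  have : 1 - δ ≤ (1 / (N:ℝ)) * ∑ i ∈ Finset.range N, Zi i := by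
    rw [div_mul_eq_mul_div, one_mul, le_div_iff₀ hNR]
    linarith [hsum]
  linarith


end Polar
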